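/- Let A be a d×d real matrix. Then the following are equivalent: (i) A is a completely positive matrix; (ii) the pair (A,A) (regarded over ℂ) is pairwise completely positive (PCP); (iii) the triple (A,A,A) (regarded over ℂ) is triplewise completely positive (TCP). -/

import Mathlib

open Matrix

/-- A real matrix is completely positive if `A = V Vᵀ` for an entrywise nonnegative `V`. -/
def CompletelyPositive {d : ℕ} (A : Matrix (Fin d) (Fin d) ℝ) : Prop :=
  ∃ (d' : ℕ) (V : Matrix (Fin d) (Fin d') ℝ),
    (∀ i j, 0 ≤ V i j) ∧ A = V * Vᵀ

/-- Pairwise complete positivity of a pair `(A,B)`. -/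
def PCP {d : ℕ} (A B : Matrix (Fin d) (Fin d) ℂ) : Prop :=
  ∃ (d' : ℕ) (V W : Matrix (Fin d) (Fin d') ℂ),
    A = (V ⊙ V.map star) * (W ⊙ W.map star)ᴴ ∧
    B = (V ⊙ W) * (V ⊙ W)ᴴ

/-- Triplewise complete positivity of a triple `(A,B,C)`. -/
def TCP {d : ℕ} (A B C : Matrix (Fin d) (Fin d) ℂ) : Prop :=
  ∃ (d' : ℕ) (V W : Matrix (Fin d) (Fin d') ℂ),
    A = (V ⊙ V.map star) * (W ⊙ W.map star)ᴴ ∧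
    B = (V ⊙ W) * (V ⊙ W)ᴴ ∧
    C = (V ⊙ W.map star) * (V ⊙ W.map star)ᴴ

theorem stmt4 {d : ℕ} (A : Matrix (Fin d) (Fin d) ℝ) :
    [CompletelyPositive A,
     PCP (A.map Complex.ofReal) (A.map Complex.ofReal),
     TCP (A.map Complex.ofReal) (A.map Complex.ofReal) (A.map Complex.ofReal)].TFAE := by
  tfae_have 1 → 3 := by
    rintro ⟨d', V, hV, hA⟩
    refine ⟨d', fun i j => (Real.sqrt (V i j) : ℂ), fun i j => (Real.sqrt (V i j) : ℂ),
      ?_, ?_, ?_⟩ <;>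
    · subst hA
      ext i j
      simp only [Matrix.mul_apply, Matrix.hadamard_apply, Matrix.conjTranspose_apply,
        Matrix.map_apply, Matrix.transpose_apply, Complex.ofReal_sum]
      have hsq : ∀ a b, ((Real.sqrt (V a b) : ℂ)) * (Real.sqrt (V a b) : ℂ) = ((V a b : ℝ) : ℂ) :=
        fun a b => by rw [← Complex.ofReal_mul, Real.mul_self_sqrt (hV a b)]
      refine Finset.sum_congr rfl fun k _ => ?_
      simp only [Matrix.hadamard, Matrix.map, Matrix.of_apply]
      simp only [Complex.star_def, _root_.map_mul, Complex.conj_ofReal, Complex.ofReal_mul]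
      rw [mul_comm ((Real.sqrt (V j k) : ℂ)) ((Real.sqrt (V j k) : ℂ))]
      rw [hsq, hsq]
  tfae_have 3 → 2 := by
    rintro ⟨d', V, W, h1, h2, h3⟩
    exact ⟨d', V, W, h1, h2⟩
  tfae_have 2 → 1 := by
    rintro ⟨d', V, W, h1, h2⟩
    have e1 : ∀ i j, A i j = ∑ k, Complex.normSq (V i k) * Complex.normSq (W j k) := by
      intro i j
      have h := congrFun (congrFun h1 i) j
      simp only [Matrix.mul_apply, Matrix.hadamard_apply, Matrix.conjTranspose_apply,
        Matrix.map_apply, Complex.star_def, Complex.mul_conj,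
        Complex.conj_ofReal] at h
      exact_mod_cast h
    have e2 : ∀ i j, (A i j : ℂ) = ∑ k, (V i k * W i k) * star (V j k * W j k) := by
      intro i j
      have h := congrFun (congrFun h2 i) j
      simpa only [Matrix.mul_apply, Matrix.hadamard_apply, Matrix.conjTranspose_apply,
        Matrix.map_apply] using h
    have hApos : ∀ i j, 0 ≤ A i j := by
      intro i j
      rw [e1 i j]
      exact Finset.sum_nonneg fun k _ =>
        mul_nonneg (Complex.normSq_nonneg _) (Complex.normSq_nonneg _)
    have hsym : ∀ i j, A j i = A i j := by
      intro i j
      have h : (A j i : ℂ) = star ((A i j : ℂ)) := by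
        rw [e2 i j, e2 j i, star_sum]
        refine Finset.sum_congr rfl fun k _ => ?_
        simp only [StarMul.star_mul, star_star]
      rw [Complex.star_def, Complex.conj_ofReal] at h
      exact_mod_cast h
    refine ⟨d', Matrix.of fun i k => ‖V i k * W i k‖, fun i k => norm_nonneg (V i k * W i k), ?_⟩
    ext i j
    rw [Matrix.mul_apply]
    simp only [Matrix.transpose_apply, Matrix.of_apply]
    have upper : A i j ≤ ∑ k, ‖V i k * W i k‖ * ‖V j k * W j k‖ := by
      calc A i j = ‖(A i j : ℂ)‖ := by
            rw [Complex.norm_real, Real.norm_eq_abs, abs_of_nonneg (hApos i j)]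
        _ = ‖∑ k, (V i k * W i k) * star (V j k * W j k)‖ := by rw [← e2]
        _ ≤ ∑ k, ‖(V i k * W i k) * star (V j k * W j k)‖ :=
            norm_sum_le _ _
        _ = ∑ k, ‖V i k * W i k‖ * ‖V j k * W j k‖ := by
            refine Finset.sum_congr rfl fun k _ => ?_
            simp only [norm_mul, Complex.star_def, Complex.norm_conj]
    have lower : ∑ k, ‖V i k * W i k‖ * ‖V j k * W j k‖ ≤ A i j := by
      have step : ∀ k, ‖V i k * W i k‖ * ‖V j k * W j k‖ ≤
          (Complex.normSq (V i k) * Complex.normSq (W j k) +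
           Complex.normSq (V j k) * Complex.normSq (W i k)) / 2 := by
        intro k
        simp only [norm_mul, Complex.normSq_eq_norm_sq]
        nlinarith [sq_nonneg (‖V i k‖ * ‖W j k‖ -
            ‖V j k‖ * ‖W i k‖),
          norm_nonneg (V i k), norm_nonneg (V j k),
          norm_nonneg (W i k), norm_nonneg (W j k)]
      calc ∑ k, ‖V i k * W i k‖ * ‖V j k * W j k‖
          ≤ ∑ k, (Complex.normSq (V i k) * Complex.normSq (W j k) +
              Complex.normSq (V j k) * Complex.normSq (W i k)) / 2 :=
            Finset.sum_le_sum fun k _ => step k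
        _ = (A i j + A j i) / 2 := by
            rw [e1 i j, e1 j i, ← Finset.sum_add_distrib, Finset.sum_div]
        _ = A i j := by rw [hsym i j]; ring
    exact le_antisymm upper lower
  tfae_finish
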